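/- Among all probability distributions on the positive integers {1,2,...} with mean at most μ (where μ ≥ 1), the geometric distribution with parameter 1/μ maximizes Shannon entropy. -/

import Mathlib

/-- Gibbs pointwise inequality. -/
lemma gibbs_pointwise (x y : ℝ) (hx : 0 ≤ x) (hy : 0 < y) :
    Real.negMulLog x ≤ x * (-Real.log y) + (y - x) := by
  rcases eq_or_lt_of_le hx with h | h
  · simp [← h, Real.negMulLog]
    linarith
  · have h1 : Real.log (y / x) ≤ y / x - 1 := Real.log_le_sub_one_of_pos (by positivity)
    have h2 : x * Real.log (y / x) ≤ x * (y / x - 1) :=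
      mul_le_mul_of_nonneg_left h1 h.le
    rw [Real.log_div hy.ne' h.ne'] at h2
    have h3 : x * (y / x - 1) = y - x := by field_simp
    rw [h3] at h2
    unfold Real.negMulLog
    nlinarith

/-- Among all probability distributions on {1,2,...} with mean at most μ (μ ≥ 1),
the geometric distribution with parameter 1/μ maximizes Shannon entropy.
Here `f k` is the probability of the value `k` (so `f 0 = 0`), and the geometric
distribution with parameter 1/μ assigns (1/μ)(1-1/μ)^(k-1) to the value k. -/
theorem stmt_1 (μ : ℝ) (hμ : 1 ≤ μ) (f : ℕ → ℝ)
    (hf0 : f 0 = 0) (hfnn : ∀ k, 0 ≤ f k)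
    (hsum : Summable f) (htot : ∑' k, f k = 1)
    (hmean_sum : Summable fun k : ℕ => (k : ℝ) * f k)
    (hmean : ∑' k : ℕ, (k : ℝ) * f k ≤ μ)
    (hent : Summable fun k : ℕ => Real.negMulLog (f k)) :
    ∑' k : ℕ, Real.negMulLog (f k) ≤
      ∑' k : ℕ, Real.negMulLog ((1 / μ) * (1 - 1 / μ) ^ k) := by
  rcases eq_or_lt_of_le hμ with hμ1 | hμ1
  · -- μ = 1 : both sides are zero
    have hμ1 : μ = 1 := hμ1.symm
    subst hμ1
    -- mean is ≥ 1 pointwise, and ≤ 1, so f k = 0 for k ≥ 2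
    have hdiff : Summable fun k : ℕ => (k : ℝ) * f k - f k := hmean_sum.sub hsum
    have hdnn : ∀ k : ℕ, 0 ≤ (k : ℝ) * f k - f k := by
      intro k
      rcases Nat.eq_zero_or_pos k with h | h
      · simp [h, hf0]
      · have : (1 : ℝ) ≤ (k : ℝ) := by exact_mod_cast h
        nlinarith [hfnn k]
    have hdsum : ∑' k : ℕ, ((k : ℝ) * f k - f k) ≤ 0 := by
      rw [Summable.tsum_sub hmean_sum hsum, htot]; linarith
    have hzero : ∀ k : ℕ, (k : ℝ) * f k - f k = 0 := by
      intro k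
      have := Summable.le_tsum hdiff k (fun j _ => hdnn j)
      have := hdnn k
      linarith
    have hf2 : ∀ k : ℕ, 2 ≤ k → f k = 0 := by
      intro k hk
      have := hzero k
      have h2 : (2 : ℝ) ≤ (k : ℝ) := by exact_mod_cast hk
      nlinarith [hfnn k]
    have hf1 : f 1 = 1 := by
      have e1 : ∑' k : ℕ, f k = f 0 + ∑' k : ℕ, f (k + 1) := Summable.tsum_eq_zero_add hsum
      have hs1 : Summable fun k : ℕ => f (k + 1) := (summable_nat_add_iff 1).2 hsum
      have e2 : ∑' k : ℕ, f (k + 1) = f 1 + ∑' k : ℕ, f (k + 2) := Summable.tsum_eq_zero_add hs1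
      have e3 : ∑' k : ℕ, f (k + 2) = 0 := by
        have : ∀ k : ℕ, f (k + 2) = 0 := fun k => hf2 (k + 2) (by omega)
        simp [this]
      rw [htot, hf0, e2, e3] at e1
      linarith
    have hL : ∑' k : ℕ, Real.negMulLog (f k) = 0 := by
      have : ∀ k : ℕ, Real.negMulLog (f k) = 0 := by
        intro k
        match k with
        | 0 => simp [hf0]
        | 1 => simp [hf1]
        | (n + 2) => simp [hf2 (n + 2) (by omega)]
      simp [this]
    have hR : ∑' k : ℕ, Real.negMulLog ((1 / 1 : ℝ) * (1 - 1 / 1) ^ k) = 0 := by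
      have h0 : ∀ k : ℕ, Real.negMulLog ((1 / 1 : ℝ) * (1 - 1 / 1) ^ k) = 0 := by
        intro k
        match k with
        | 0 => norm_num
        | (n + 1) => norm_num
      calc ∑' k : ℕ, Real.negMulLog ((1 / 1 : ℝ) * (1 - 1 / 1) ^ k)
          = ∑' _ : ℕ, (0 : ℝ) := tsum_congr h0
        _ = 0 := tsum_zero
    rw [hL, hR]
  · -- μ > 1
    set q : ℝ := 1 / μ with hq_def
    set r : ℝ := 1 - 1 / μ with hr_def
    have hμ0 : (0 : ℝ) < μ := by linarith
    have hq0 : 0 < q := by positivity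
    have hq1 : q < 1 := by rw [hq_def]; rw [div_lt_one hμ0]; linarith
    have hr0 : 0 < r := by simp only [hr_def]; linarith
    have hr1 : r < 1 := by simp only [hr_def]; linarith
    have hqr : 1 - r = q := by simp [hq_def, hr_def]
    have hrq : r / q = μ - 1 := by
      rw [hq_def, hr_def]; field_simp
    -- shifted distribution
    set φ : ℕ → ℝ := fun k => f (k + 1) with hφ_def
    have hφnn : ∀ k, 0 ≤ φ k := fun k => hfnn (k + 1)
    have hφs : Summable φ := (summable_nat_add_iff 1).2 hsum
    have hφtot : ∑' k, φ k = 1 := by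
      have := Summable.tsum_eq_zero_add hsum
      rw [htot, hf0] at this
      linarith [this]
    have hms : Summable (fun k : ℕ => ((k : ℝ) + 1) * φ k) := by
      have h := (summable_nat_add_iff (f := fun k : ℕ => (k : ℝ) * f k) 1).2 hmean_sum
      refine h.congr fun k => ?_
      push_cast
      ring
    have hm_eq : ∑' k : ℕ, ((k : ℝ) + 1) * φ k = ∑' k : ℕ, (k : ℝ) * f k := by
      have h := Summable.tsum_eq_zero_add hmean_sum
      rw [h]
      simp only [Nat.cast_zero, zero_mul, zero_add]
      exact (tsum_congr fun k => by push_cast; ring).symm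
    have hm_le : ∑' k : ℕ, ((k : ℝ) + 1) * φ k ≤ μ := by rw [hm_eq]; exact hmean
    have hm_ge : 1 ≤ ∑' k : ℕ, ((k : ℝ) + 1) * φ k := by
      calc (1 : ℝ) = ∑' k, φ k := hφtot.symm
        _ ≤ ∑' k : ℕ, ((k : ℝ) + 1) * φ k := by
            refine Summable.tsum_le_tsum (fun k => ?_) hφs hms
            nlinarith [hφnn k, Nat.cast_nonneg (α := ℝ) k]
    have hkφs : Summable (fun k : ℕ => (k : ℝ) * φ k) := by
      have := hms.sub hφs
      refine this.congr fun k => ?_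
      ring
    have hkφ : ∑' k : ℕ, (k : ℝ) * φ k = (∑' k : ℕ, ((k : ℝ) + 1) * φ k) - 1 := by
      have := Summable.tsum_sub hms hφs
      rw [hφtot] at this
      rw [← this]
      exact tsum_congr fun k => by ring
    -- entropy of φ
    have hentφ : Summable fun k : ℕ => Real.negMulLog (φ k) :=
      (summable_nat_add_iff (f := fun k : ℕ => Real.negMulLog (f k)) 1).2 hent
    have hL : ∑' k : ℕ, Real.negMulLog (f k) = ∑' k : ℕ, Real.negMulLog (φ k) := by
      have := Summable.tsum_eq_zero_add hent
      rw [this, hf0, Real.negMulLog_zero, zero_add]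
    -- the bounding function B
    set B : ℕ → ℝ := fun k => φ k * (-Real.log (q * r ^ k)) + (q * r ^ k - φ k) with hB_def
    have hBexp : ∀ k : ℕ, B k =
        (-Real.log q) * φ k + (-Real.log r) * ((k : ℝ) * φ k) + q * r ^ k - φ k := by
      intro k
      rw [hB_def]
      have : Real.log (q * r ^ k) = Real.log q + (k : ℝ) * Real.log r := by
        rw [Real.log_mul hq0.ne' (by positivity), Real.log_pow]
      simp only [this]
      ring
    have hgeos : Summable fun k : ℕ => (r : ℝ) ^ k := summable_geometric_of_lt_one hr0.le hr1
    have hBs : Summable B := by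
      have : Summable fun k : ℕ =>
          (-Real.log q) * φ k + (-Real.log r) * ((k : ℝ) * φ k) + q * r ^ k - φ k :=
        (((hφs.mul_left _).add (hkφs.mul_left _)).add (hgeos.mul_left q)).sub hφs
      exact this.congr fun k => (hBexp k).symm
    have hBsum : ∑' k, B k = -Real.log q + (-Real.log r) * ((∑' k : ℕ, ((k : ℝ) + 1) * φ k) - 1) := by
      have e : ∑' k, B k = ∑' k : ℕ,
          ((-Real.log q) * φ k + (-Real.log r) * ((k : ℝ) * φ k) + q * r ^ k - φ k) :=
        tsum_congr hBexp
      rw [e, Summable.tsum_sub (((hφs.mul_left _).add (hkφs.mul_left _)).add (hgeos.mul_left q)) hφs,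
        Summable.tsum_add ((hφs.mul_left _).add (hkφs.mul_left _)) (hgeos.mul_left q),
        Summable.tsum_add (hφs.mul_left _) (hkφs.mul_left _),
        tsum_mul_left, tsum_mul_left, tsum_mul_left,
        hφtot, hkφ, tsum_geometric_of_lt_one hr0.le hr1, hqr]
      field_simp; ring
    -- Gibbs bound
    have hLB : ∑' k : ℕ, Real.negMulLog (φ k) ≤ ∑' k, B k := by
      refine Summable.tsum_le_tsum (fun k => ?_) hentφ hBs
      exact gibbs_pointwise (φ k) (q * r ^ k) (hφnn k) (by positivity)
    -- RHS value
    have hlogr : Real.log r < 0 := Real.log_neg hr0 hr1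
    have hRs : ∀ k : ℕ, Real.negMulLog (q * r ^ k) =
        (-Real.log q) * (q * r ^ k) + (-Real.log r) * (q * ((k : ℝ) * r ^ k)) := by
      intro k
      have : Real.log (q * r ^ k) = Real.log q + (k : ℝ) * Real.log r := by
        rw [Real.log_mul hq0.ne' (by positivity), Real.log_pow]
      unfold Real.negMulLog
      rw [this]
      ring
    have hkrs : Summable fun k : ℕ => (k : ℝ) * r ^ k := by
      have := summable_pow_mul_geometric_of_norm_lt_one (R := ℝ) 1
        (r := r) (by rw [Real.norm_eq_abs, abs_of_pos hr0]; exact hr1)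
      exact this.congr fun k => by ring
    have hkr : ∑' k : ℕ, (k : ℝ) * r ^ k = r / (1 - r) ^ 2 :=
      tsum_coe_mul_geometric_of_norm_lt_one
        (by rw [Real.norm_eq_abs, abs_of_pos hr0]; exact hr1)
    have hR : ∑' k : ℕ, Real.negMulLog (q * r ^ k)
        = -Real.log q + (-Real.log r) * (μ - 1) := by
      rw [tsum_congr hRs,
        Summable.tsum_add ((hgeos.mul_left q).mul_left _) ((hkrs.mul_left q).mul_left _),
        tsum_mul_left, tsum_mul_left, tsum_mul_left, tsum_mul_left,
        tsum_geometric_of_lt_one hr0.le hr1, hkr, hqr]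
      have h1 : q * q⁻¹ = 1 := mul_inv_cancel₀ hq0.ne'
      have h2 : q * (r / q ^ 2) = (μ - 1) := by
        rw [← hrq]; field_simp
      rw [h1, h2]
      ring
    calc ∑' k : ℕ, Real.negMulLog (f k)
        = ∑' k : ℕ, Real.negMulLog (φ k) := hL
      _ ≤ ∑' k, B k := hLB
      _ = -Real.log q + (-Real.log r) * ((∑' k : ℕ, ((k : ℝ) + 1) * φ k) - 1) := hBsum
      _ ≤ -Real.log q + (-Real.log r) * (μ - 1) := by nlinarith
      _ = ∑' k : ℕ, Real.negMulLog (q * r ^ k) := hR.symm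
      _ = ∑' k : ℕ, Real.negMulLog ((1 / μ) * (1 - 1 / μ) ^ k) := by rw [← hq_def, ← hr_def]
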